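/- Suppose (W*, V*, ξ*, E*, I*) with W*, V* ∈ ℂ^{N_T×N_T} Hermitian positive semidefinite, ξ* ∈ ℝ, E* ∈ ℝ^{K−1}, I* ∈ ℝ^{J} satisfies, with H = h hᴴ: (C1) Tr(H W*) ≥ Γ_req (Tr(H V*) + σ_z² ξ*); (C2) for every k and every Δg with Δgᴴ Δg ≤ ε_k², writing g = ĝ_k + Δg: gᴴ W* g ≤ Γ_tol_k (gᴴ V* g + σ_{z_k}² ξ*); (C3) for every j and every Δl with Δlᴴ Δl ≤ υ_j², writing l = l̂_j + Δl: lᴴ W* l ≤ Γ_tol_j^PU (lᴴ V* l + σ_PU² ξ*); (C4) Tr(W*) + Tr(V*) ≤ P_max ξ*; (C6) ξ* ≥ 0; (C7) Tr(W*) + Tr(V*) = 1; (C10) for every k and Δg as above: −η_k gᴴ (W* + V*) g ≤ E*_k; (C11) for every j and Δl as above: lᴴ (W* + V*) l ≤ I*_j. Then hᴴ W* h > 0, and defining W̃ = (W* h)(W* h)ᴴ / (hᴴ W* h) and Ṽ = V* + W* − W̃, the tuple (W̃, Ṽ, ξ*, E*, I*) satisfies all of the constraints (C1)–(C4), (C6),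 (C7), (C10), (C11), with W̃ + Ṽ = W* + V*, Tr(H W̃) = Tr(H W*), Tr(H Ṽ) = Tr(H V*), and rank(W̃) = 1. In particular, from any feasible (hence any optimal) solution of the SDP-relaxed problem one can construct a feasible solution with a rank-one beamforming matrix that achieves the same values of ξ, E, I, and therefore the same weighted Tchebycheff objective value. -/

import Mathlib

open Matrix
open scoped ComplexOrder

/-- The constraints (C1column)–(C4), (C6), (C7), (C10), (C11) of the SDP relaxation of the
transformed multi-objective resource allocation problem, in equivalent robust quantified
form, together with positive semidefiniteness of `W` and `V`. -/
def Constraints {NT K J : ℕ} (h : Fin NT → ℂ)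
    (ghat : Fin (K - 1) → Fin NT → ℂ) (lhat : Fin J → Fin NT → ℂ)
    (Γreq σz2 Pmax σPU2 : ℝ) (η Γtol σzk2 ε : Fin (K - 1) → ℝ) (ΓtolPU υ : Fin J → ℝ)
    (W V : Matrix (Fin NT) (Fin NT) ℂ) (ξ : ℝ)
    (E : Fin (K - 1) → ℝ) (I : Fin J → ℝ) : Prop :=
  W.PosSemidef ∧ V.PosSemidef ∧
  -- C1
  Γreq * ((Matrix.vecMulVec h (star h) * V).trace.re + σz2 * ξ) ≤
      (Matrix.vecMulVec h (star h) * W).trace.re ∧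
  -- C2
  (∀ k, ∀ Δg : Fin NT → ℂ, (star Δg ⬝ᵥ Δg).re ≤ ε k ^ 2 →
      (star (ghat k + Δg) ⬝ᵥ W *ᵥ (ghat k + Δg)).re ≤
        Γtol k * ((star (ghat k + Δg) ⬝ᵥ V *ᵥ (ghat k + Δg)).re + σzk2 k * ξ)) ∧
  -- C3
  (∀ j, ∀ Δl : Fin NT → ℂ, (star Δl ⬝ᵥ Δl).re ≤ υ j ^ 2 →
      (star (lhat j + Δl) ⬝ᵥ W *ᵥ (lhat j + Δl)).re ≤
        ΓtolPU j * ((star (lhat j + Δl) ⬝ᵥ V *ᵥ (lhat j + Δl)).re + σPU2 * ξ)) ∧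
  -- C4
  W.trace.re + V.trace.re ≤ Pmax * ξ ∧
  -- C6
  0 ≤ ξ ∧
  -- C7
  W.trace.re + V.trace.re = 1 ∧
  -- C10
  (∀ k, ∀ Δg : Fin NT → ℂ, (star Δg ⬝ᵥ Δg).re ≤ ε k ^ 2 →
      -η k * (star (ghat k + Δg) ⬝ᵥ (W + V) *ᵥ (ghat k + Δg)).re ≤ E k) ∧
  -- C11
  (∀ j, ∀ Δl : Fin NT → ℂ, (star Δl ⬝ᵥ Δl).re ≤ υ j ^ 2 →
      (star (lhat j + Δl) ⬝ᵥ (W + V) *ᵥ (lhat j + Δl)).re ≤ I j)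




namespace RankOneAux

set_option linter.unusedSectionVars false

variable {n : Type*} [Fintype n] [DecidableEq n]

lemma trace_hh (h : n → ℂ) (M : Matrix n n ℂ) :
    (Matrix.vecMulVec h (star h) * M).trace = star h ⬝ᵥ M *ᵥ h := by
  simp only [Matrix.trace, Matrix.diag_apply, Matrix.mul_apply, Matrix.vecMulVec_apply,
    dotProduct, Matrix.mulVec, Pi.star_apply]
  rw [Finset.sum_comm]
  refine Finset.sum_congr rfl fun i _ => ?_
  rw [Finset.mul_sum]
  refine Finset.sum_congr rfl fun j _ => ?_
  ring

lemma vecMulVec_mulVec (u v x : n → ℂ) :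
    Matrix.vecMulVec u v *ᵥ x = (v ⬝ᵥ x) • u := by
  ext i
  simp only [Matrix.mulVec, dotProduct, Matrix.vecMulVec_apply, Pi.smul_apply,
    smul_eq_mul, Finset.sum_mul]
  refine Finset.sum_congr rfl fun j _ => ?_
  ring

lemma sesq (B : Matrix n n ℂ) (x y : n → ℂ) :
    star x ⬝ᵥ (Bᴴ * B) *ᵥ y = star (B *ᵥ x) ⬝ᵥ (B *ᵥ y) := by
  rw [Matrix.star_mulVec, ← Matrix.mulVec_mulVec, Matrix.dotProduct_mulVec]

lemma cs_dot (p q : n → ℂ) :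
    Complex.normSq (star p ⬝ᵥ q) ≤ (star p ⬝ᵥ p).re * (star q ⬝ᵥ q).re := by
  have h1 := @norm_inner_le_norm ℂ (EuclideanSpace ℂ n) _ _ _
      ((WithLp.equiv 2 _).symm p) ((WithLp.equiv 2 _).symm q)
  rw [WithLp.equiv_symm_apply, EuclideanSpace.inner_toLp_toLp, dotProduct_comm] at h1
  have hp : (star p ⬝ᵥ p).re = ‖(WithLp.equiv 2 (n → ℂ)).symm p‖ ^ 2 := by
    rw [← @inner_self_eq_norm_sq ℂ, WithLp.equiv_symm_apply, EuclideanSpace.inner_toLp_toLp,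
      dotProduct_comm]
    rfl
  have hq : (star q ⬝ᵥ q).re = ‖(WithLp.equiv 2 (n → ℂ)).symm q‖ ^ 2 := by
    rw [← @inner_self_eq_norm_sq ℂ, WithLp.equiv_symm_apply, EuclideanSpace.inner_toLp_toLp,
      dotProduct_comm]
    rfl
  have h2 : Complex.normSq (star p ⬝ᵥ q) = ‖star p ⬝ᵥ q‖ ^ 2 := by
    rw [Complex.sq_norm]
  rw [h2, hp, hq]
  calc ‖star p ⬝ᵥ q‖ ^ 2
      ≤ (‖(WithLp.equiv 2 (n → ℂ)).symm p‖ * ‖(WithLp.equiv 2 (n → ℂ)).symm q‖) ^ 2 :=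
        pow_le_pow_left₀ (norm_nonneg _) h1 2
    _ = _ := by ring

lemma quad_vecMulVec (u v x : n → ℂ) :
    star x ⬝ᵥ (Matrix.vecMulVec u v *ᵥ x) = (star x ⬝ᵥ u) * (v ⬝ᵥ x) := by
  rw [vecMulVec_mulVec, dotProduct_smul]
  ring_nf

end RankOneAux

/-- From any feasible solution of the SDP-relaxed problem one can construct a feasible
solution with a rank-one beamforming matrix `W̃ = (W* h)(W* h)ᴴ/(hᴴ W* h)` and
artificial-noise covariance `Ṽ = V* + W* − W̃`, achieving the same values of `ξ`, `E`, `I`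
(and hence the same weighted Tchebycheff objective value). -/
theorem rank_one_feasible_construction {NT K J : ℕ}
    (hNT : 1 ≤ NT) (hK : 2 ≤ K) (hJ : 1 ≤ J) (h : Fin NT → ℂ)
    (ghat : Fin (K - 1) → Fin NT → ℂ) (lhat : Fin J → Fin NT → ℂ)
    (Γreq σz2 Pmax σPU2 : ℝ) (η Γtol σzk2 ε : Fin (K - 1) → ℝ) (ΓtolPU υ : Fin J → ℝ)
    (hΓreq : 0 < Γreq) (hσz : 0 < σz2) (hPmax : 0 < Pmax) (hσPU : 0 < σPU2)
    (hη : ∀ k, 0 < η k) (hΓtol : ∀ k, 0 < Γtol k) (hσzk : ∀ k, 0 < σzk2 k)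
    (hε : ∀ k, 0 < ε k) (hΓPU : ∀ j, 0 < ΓtolPU j) (hυ : ∀ j, 0 < υ j)
    (W V : Matrix (Fin NT) (Fin NT) ℂ) (ξ : ℝ) (E : Fin (K - 1) → ℝ) (I : Fin J → ℝ)
    (hfeas : Constraints h ghat lhat Γreq σz2 Pmax σPU2 η Γtol σzk2 ε ΓtolPU υ W V ξ E I) :
    0 < (star h ⬝ᵥ W *ᵥ h).re ∧
    (let Wt : Matrix (Fin NT) (Fin NT) ℂ :=
        (star h ⬝ᵥ W *ᵥ h)⁻¹ • Matrix.vecMulVec (W *ᵥ h) (star (W *ᵥ h))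
     let Vt : Matrix (Fin NT) (Fin NT) ℂ := V + W - Wt
     Constraints h ghat lhat Γreq σz2 Pmax σPU2 η Γtol σzk2 ε ΓtolPU υ Wt Vt ξ E I ∧
     Wt + Vt = W + V ∧
     (Matrix.vecMulVec h (star h) * Wt).trace = (Matrix.vecMulVec h (star h) * W).trace ∧
     (Matrix.vecMulVec h (star h) * Vt).trace = (Matrix.vecMulVec h (star h) * V).trace ∧
     Wt.rank = 1) := by
  obtain ⟨hWps, hVps, hC1, hC2, hC3, hC4, hC6, hC7, hC10, hC11⟩ := hfeas
  have hle : (0 : ℂ) ≤ star h ⬝ᵥ W *ᵥ h := hWps.dotProduct_mulVec_nonneg h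
  have hcre0 : 0 ≤ (star h ⬝ᵥ W *ᵥ h).re := by simpa using (Complex.le_def.mp hle).1
  have hcim : (star h ⬝ᵥ W *ᵥ h).im = 0 := by simpa using (Complex.le_def.mp hle).2.symm
  have hVh : 0 ≤ (star h ⬝ᵥ V *ᵥ h).re := by simpa using (Complex.le_def.mp (hVps.dotProduct_mulVec_nonneg h)).1
  -- positivity of hᴴ W h
  have hpos : 0 < (star h ⬝ᵥ W *ᵥ h).re := by
    rcases lt_or_eq_of_le hcre0 with h' | h'
    · exact h'
    · exfalso
      rw [RankOneAux.trace_hh, RankOneAux.trace_hh] at hC1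
      have hξle : ξ ≤ 0 := by
        nlinarith [mul_pos hΓreq hσz, mul_nonneg hΓreq.le hVh]
      have hξ0 : ξ = 0 := le_antisymm hξle hC6
      rw [hξ0, mul_zero] at hC4
      linarith
  have hcne : star h ⬝ᵥ W *ᵥ h ≠ 0 := by
    intro hh; rw [hh] at hpos; simp at hpos
  have hcr : star h ⬝ᵥ W *ᵥ h = ((star h ⬝ᵥ W *ᵥ h).re : ℂ) := by
    rw [Complex.ext_iff]; simp [hcim]
  obtain ⟨B, hB⟩ : ∃ B : Matrix (Fin NT) (Fin NT) ℂ, W = Bᴴ * B := by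
    open scoped MatrixOrder in
    obtain ⟨B, hB⟩ := CStarAlgebra.nonneg_iff_eq_star_mul_self.mp hWps.nonneg
    exact ⟨B, hB⟩
  -- basic dot-product identities
  have haW : ∀ x : Fin NT → ℂ, star (W *ᵥ h) ⬝ᵥ x = star h ⬝ᵥ W *ᵥ x := by
    intro x
    rw [Matrix.star_mulVec, hWps.1, ← Matrix.dotProduct_mulVec]
  have hBW : ∀ x y : Fin NT → ℂ, star x ⬝ᵥ W *ᵥ y = star (B *ᵥ x) ⬝ᵥ (B *ᵥ y) := by
    intro x y; rw [hB, RankOneAux.sesq]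
  refine ⟨hpos, ?_⟩
  dsimp only
  -- the quadratic form of Wt
  have key_formula : ∀ x : Fin NT → ℂ,
      star x ⬝ᵥ ((star h ⬝ᵥ W *ᵥ h)⁻¹ •
          Matrix.vecMulVec (W *ᵥ h) (star (W *ᵥ h))) *ᵥ x
        = ((Complex.normSq (star (W *ᵥ h) ⬝ᵥ x) / (star h ⬝ᵥ W *ᵥ h).re : ℝ) : ℂ) := by
    intro x
    rw [Matrix.smul_mulVec, dotProduct_smul, RankOneAux.quad_vecMulVec,
      Matrix.star_dotProduct (W *ᵥ h) x]
    rw [Complex.star_def, Complex.mul_conj, Complex.normSq_conj]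
    rw [smul_eq_mul]
    conv_lhs => rw [hcr]
    rw [← Complex.ofReal_inv, ← Complex.ofReal_mul, Complex.ofReal_inj]
    ring
  have hnormc : Complex.normSq (star h ⬝ᵥ W *ᵥ h)
      = (star h ⬝ᵥ W *ᵥ h).re * (star h ⬝ᵥ W *ᵥ h).re := by
    rw [Complex.normSq_apply, hcim]; ring
  -- Wt is PSD
  have hWtherm : ((star h ⬝ᵥ W *ᵥ h)⁻¹ •
      Matrix.vecMulVec (W *ᵥ h) (star (W *ᵥ h))).IsHermitian := by
    have h1 : (Matrix.vecMulVec (W *ᵥ h) (star (W *ᵥ h))).IsHermitian := by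
      ext i j
      simp only [Matrix.conjTranspose_apply, Matrix.vecMulVec_apply, Pi.star_apply,
        star_mul', star_star]
      ring
    show _ = _
    rw [Matrix.conjTranspose_smul, h1]
    congr 1
    rw [hcr]
    simp [← Complex.ofReal_inv, Complex.star_def, Complex.conj_ofReal]
  have hWtps : ((star h ⬝ᵥ W *ᵥ h)⁻¹ •
      Matrix.vecMulVec (W *ᵥ h) (star (W *ᵥ h))).PosSemidef := by
    refine .of_dotProduct_mulVec_nonneg hWtherm fun x => ?_
    rw [key_formula x]
    exact Complex.zero_le_real.mpr (div_nonneg (Complex.normSq_nonneg _) hpos.le)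
  -- key inequality : quadratic form of Wt is dominated by that of W
  have hkey : ∀ x : Fin NT → ℂ,
      (star x ⬝ᵥ ((star h ⬝ᵥ W *ᵥ h)⁻¹ •
          Matrix.vecMulVec (W *ᵥ h) (star (W *ᵥ h))) *ᵥ x).re
        ≤ (star x ⬝ᵥ W *ᵥ x).re := by
    intro x
    rw [key_formula x, Complex.ofReal_re, div_le_iff₀ hpos]
    have hcs := RankOneAux.cs_dot (B *ᵥ h) (B *ᵥ x)
    rw [← hBW h x, ← hBW h h, ← hBW x x] at hcs
    rw [haW x]
    nlinarith [hcs]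
  -- the quadratic form of Wt at h equals that of W
  have hWth : star h ⬝ᵥ ((star h ⬝ᵥ W *ᵥ h)⁻¹ •
      Matrix.vecMulVec (W *ᵥ h) (star (W *ᵥ h))) *ᵥ h = star h ⬝ᵥ W *ᵥ h := by
    rw [key_formula h, haW h, hnormc]
    rw [show ((star h ⬝ᵥ W *ᵥ h).re * (star h ⬝ᵥ W *ᵥ h).re) / (star h ⬝ᵥ W *ᵥ h).re
        = (star h ⬝ᵥ W *ᵥ h).re from by field_simp]
    exact hcr.symm
  set Wt : Matrix (Fin NT) (Fin NT) ℂ :=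
    (star h ⬝ᵥ W *ᵥ h)⁻¹ • Matrix.vecMulVec (W *ᵥ h) (star (W *ᵥ h)) with hWtdef
  have hVt_quad : ∀ x : Fin NT → ℂ,
      star x ⬝ᵥ (V + W - Wt) *ᵥ x
        = star x ⬝ᵥ V *ᵥ x + star x ⬝ᵥ W *ᵥ x - star x ⬝ᵥ Wt *ᵥ x := by
    intro x
    simp [Matrix.add_mulVec, Matrix.sub_mulVec, dotProduct_add, dotProduct_sub]
  have himV : ∀ x, (star x ⬝ᵥ V *ᵥ x).im = 0 := fun x => by
    simpa using (Complex.le_def.mp (hVps.dotProduct_mulVec_nonneg x)).2.symm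
  have himW : ∀ x, (star x ⬝ᵥ W *ᵥ x).im = 0 := fun x => by
    simpa using (Complex.le_def.mp (hWps.dotProduct_mulVec_nonneg x)).2.symm
  have himWt : ∀ x, (star x ⬝ᵥ Wt *ᵥ x).im = 0 := fun x => by
    rw [key_formula x]; simp
  have hVre : ∀ x, 0 ≤ (star x ⬝ᵥ V *ᵥ x).re := fun x => by
    simpa using (Complex.le_def.mp (hVps.dotProduct_mulVec_nonneg x)).1
  have hVtps : (V + W - Wt).PosSemidef := by
    refine .of_dotProduct_mulVec_nonneg ((hVps.1.add hWps.1).sub hWtherm) fun x => ?_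
    rw [hVt_quad x, Complex.le_def]
    constructor
    · simp only [Complex.zero_re, Complex.sub_re, Complex.add_re]
      linarith [hkey x, hVre x]
    · simp only [Complex.zero_im, Complex.sub_im, Complex.add_im,
        himV x, himW x, himWt x]
      ring
  have hVt_re : ∀ x : Fin NT → ℂ,
      (star x ⬝ᵥ V *ᵥ x).re ≤ (star x ⬝ᵥ (V + W - Wt) *ᵥ x).re := by
    intro x
    rw [hVt_quad x]
    simp only [Complex.sub_re, Complex.add_re]
    linarith [hkey x]
  have hVth : star h ⬝ᵥ (V + W - Wt) *ᵥ h = star h ⬝ᵥ V *ᵥ h := by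
    rw [hVt_quad h, hWth]; ring
  have hWtVt : Wt + (V + W - Wt) = W + V := by abel
  have htr : Wt.trace.re + (V + W - Wt).trace.re = W.trace.re + V.trace.re := by
    have h3 : (Wt + (V + W - Wt)).trace = (W + V).trace := by rw [hWtVt]
    rw [Matrix.trace_add, Matrix.trace_add] at h3
    have := congrArg Complex.re h3
    simpa [Complex.add_re] using this
  refine ⟨⟨hWtps, hVtps, ?_, ?_, ?_, ?_, hC6, ?_, ?_, ?_⟩, hWtVt, ?_, ?_, ?_⟩
  · -- C1
    rw [RankOneAux.trace_hh, RankOneAux.trace_hh, hWth, hVth]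
    rw [RankOneAux.trace_hh, RankOneAux.trace_hh] at hC1
    exact hC1
  · -- C2
    intro k Δg hΔ
    have h0 := hC2 k Δg hΔ
    have h1 := hkey (ghat k + Δg)
    have h2 := hVt_re (ghat k + Δg)
    have h3 := mul_le_mul_of_nonneg_left h2 (hΓtol k).le
    nlinarith
  · -- C3
    intro j Δl hΔ
    have h0 := hC3 j Δl hΔ
    have h1 := hkey (lhat j + Δl)
    have h2 := hVt_re (lhat j + Δl)
    have h3 := mul_le_mul_of_nonneg_left h2 (hΓPU j).le
    nlinarith
  · -- C4
    linarith [htr, hC4]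
  · -- C7
    linarith [htr, hC7]
  · -- C10
    intro k Δg hΔ
    rw [hWtVt]
    exact hC10 k Δg hΔ
  · -- C11
    intro j Δl hΔ
    rw [hWtVt]
    exact hC11 j Δl hΔ
  · -- trace Wt
    rw [RankOneAux.trace_hh, RankOneAux.trace_hh, hWth]
  · -- trace Vt
    rw [RankOneAux.trace_hh, RankOneAux.trace_hh, hVth]
  · -- rank
    have hu0 : W *ᵥ h ≠ 0 := by
      intro h0
      apply hcne
      have h1 : star h ⬝ᵥ W *ᵥ h = star h ⬝ᵥ (0 : Fin NT → ℂ) := by rw [h0]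
      simpa using h1
    have hrange : LinearMap.range Wt.mulVecLin = ℂ ∙ (W *ᵥ h) := by
      apply le_antisymm
      · rintro y ⟨x, rfl⟩
        rw [Matrix.mulVecLin_apply, hWtdef, Matrix.smul_mulVec,
          RankOneAux.vecMulVec_mulVec]
        exact Submodule.smul_mem _ _
          (Submodule.smul_mem _ _ (Submodule.mem_span_singleton_self _))
      · rw [Submodule.span_singleton_le_iff_mem]
        refine ⟨h, ?_⟩
        rw [Matrix.mulVecLin_apply, hWtdef, Matrix.smul_mulVec,
          RankOneAux.vecMulVec_mulVec, haW h, smul_smul, inv_mul_cancel₀ hcne, one_smul]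
    rw [Matrix.rank, hrange]
    exact finrank_span_singleton hu0
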